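/- Let D > 1 and suppose Q : [1,D] → ℝ satisfies ‖1/x − Q(x)‖_{L^∞([1,D])} ≤ ζ with ζ ∈ (0,1). Define recursively R₁ = Q and R_{n+1}(x) = M(R_n(x), Q(x)), where M : ℝ² → ℝ satisfies |M(u,v) − uv| ≤ ζ on the relevant domain (containing all values R_n(x), Q(x) for x ∈ [1,D]). Then for every n ≥ 1, ‖x^{−n} − R_n‖_{L^∞([1,D])} ≤ (2n+1)(1+ζ)^n ζ. -/

import Mathlib

theorem stmt_10 (D ζ : ℝ) (hD : 1 < D) (hζ : ζ ∈ Set.Ioo (0:ℝ) 1)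
    (Q : ℝ → ℝ) (M : ℝ → ℝ → ℝ) (R : ℕ → ℝ → ℝ)
    (hQ : ∀ x ∈ Set.Icc 1 D, |1/x - Q x| ≤ ζ)
    (hR1 : ∀ x : ℝ, R 1 x = Q x)
    (hRS : ∀ n : ℕ, ∀ x : ℝ, R (n+1) x = M (R n x) (Q x))
    (hM : ∀ n : ℕ, 1 ≤ n → ∀ x ∈ Set.Icc 1 D,
      |M (R n x) (Q x) - R n x * Q x| ≤ ζ) :
    ∀ n : ℕ, 1 ≤ n → ∀ x ∈ Set.Icc 1 D,
      |1/x^n - R n x| ≤ (2*(n:ℝ) + 1) * (1 + ζ)^n * ζ := by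
  obtain ⟨hζ0, hζ1⟩ := hζ
  intro n hn
  induction n with
  | zero => omega
  | succ n ih =>
    intro x hx
    obtain ⟨hx1, hxD⟩ := hx
    have hx0 : (0:ℝ) < x := lt_of_lt_of_le one_pos hx1
    have hpow : ∀ m : ℕ, 1/x^m ≤ 1 := by
      intro m
      have h1 : (1:ℝ) ≤ x^m := one_le_pow₀ hx1
      rw [div_le_one (by positivity)]; exact h1
    have hpow0 : ∀ m : ℕ, 0 < 1/x^m := by
      intro m; positivity
    have hQx := hQ x ⟨hx1, hxD⟩
    rcases Nat.lt_or_ge n 1 with h1 | hn1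
    · have hn0 : n = 0 := by omega
      subst hn0
      rw [hR1]
      have hone : (1:ℝ) ≤ (1+ζ)^1 := by nlinarith
      calc |1/x^1 - Q x| = |1/x - Q x| := by rw [pow_one]
        _ ≤ ζ := hQx
        _ ≤ (2*(((0:ℕ)+1:ℕ):ℝ) + 1) * (1 + ζ)^(0+1) * ζ := by push_cast; nlinarith
    · have ihx := ih hn1 x ⟨hx1, hxD⟩
      have hMx := hM n hn1 x ⟨hx1, hxD⟩
      set a := 1/x - Q x with ha
      set b := 1/x^n - R n x with hb
      have hB0 : (0:ℝ) ≤ (2*(n:ℝ) + 1) * (1 + ζ)^n * ζ := by positivity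
      have hab : |a| ≤ ζ := hQx
      have habs : |b| ≤ (2*(n:ℝ) + 1) * (1 + ζ)^n * ζ := ihx
      have key : 1/x^(n+1) - R n x * Q x = a * (1/x^n) + b * (1/x) - a * b := by
        have hxne : x ≠ 0 := ne_of_gt hx0
        have hxn : (x:ℝ)^n ≠ 0 := pow_ne_zero _ hxne
        rw [ha, hb]
        field_simp
        ring
      have hbound : |1/x^(n+1) - R n x * Q x| ≤
          ζ * 1 + (2*(n:ℝ) + 1) * (1 + ζ)^n * ζ * 1 + ζ * ((2*(n:ℝ) + 1) * (1 + ζ)^n * ζ) := by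
        rw [key]
        calc |a * (1/x^n) + b * (1/x) - a * b|
            ≤ |a * (1/x^n)| + |b * (1/x)| + |a * b| := by
              have := abs_add_le (a * (1/x^n) + b * (1/x)) (-(a*b))
              have h2 := abs_add_le (a * (1/x^n)) (b * (1/x))
              simp only [abs_neg] at this
              calc |a * (1/x^n) + b * (1/x) - a * b|
                  = |(a * (1/x^n) + b * (1/x)) + -(a*b)| := by ring_nf
                _ ≤ |a * (1/x^n) + b * (1/x)| + |a*b| := by simpa using this
                _ ≤ |a * (1/x^n)| + |b * (1/x)| + |a*b| := by linarith
          _ ≤ ζ * 1 + (2*(n:ℝ) + 1) * (1 + ζ)^n * ζ * 1 + ζ * ((2*(n:ℝ) + 1) * (1 + ζ)^n * ζ) := by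
              rw [abs_mul, abs_mul, abs_mul]
              have h1 : |1/x^n| ≤ 1 := by rw [abs_of_pos (hpow0 n)]; exact hpow n
              have h2 : |1/x| ≤ 1 := by
                have := hpow 1; have := hpow0 1
                rw [abs_of_pos (by simpa using hpow0 1)]
                simpa using hpow 1
              have ha0 : (0:ℝ) ≤ |a| := abs_nonneg a
              have hb0' : (0:ℝ) ≤ |b| := abs_nonneg b
              have h3 : |a| * |1/x^n| ≤ ζ * 1 := by
                apply mul_le_mul hab h1 (abs_nonneg _) (le_of_lt hζ0)
              have h4 : |b| * |1/x| ≤ (2*(n:ℝ) + 1) * (1 + ζ)^n * ζ * 1 := by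
                apply mul_le_mul habs h2 (abs_nonneg _) hB0
              have h5 : |a| * |b| ≤ ζ * ((2*(n:ℝ) + 1) * (1 + ζ)^n * ζ) := by
                apply mul_le_mul hab habs (abs_nonneg _) (le_of_lt hζ0)
              linarith
      have final : |1/x^(n+1) - R (n+1) x| ≤
          ζ + |1/x^(n+1) - R n x * Q x| := by
        rw [hRS]
        calc |1/x^(n+1) - M (R n x) (Q x)|
            = |(1/x^(n+1) - R n x * Q x) + -(M (R n x) (Q x) - R n x * Q x)| := by ring_nf
          _ ≤ |1/x^(n+1) - R n x * Q x| + |M (R n x) (Q x) - R n x * Q x| := by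
              have h := abs_add_le (1/x^(n+1) - R n x * Q x) (-(M (R n x) (Q x) - R n x * Q x))
              rw [abs_neg] at h; exact h
          _ ≤ ζ + |1/x^(n+1) - R n x * Q x| := by linarith [hMx]
      have hgeom : (1:ℝ) ≤ (1+ζ)^(n+1) := one_le_pow₀ (by linarith)
      have hstep : (1+ζ)^(n+1) = (1+ζ)^n * (1+ζ) := pow_succ _ _
      calc |1/x^(n+1) - R (n+1) x|
          ≤ ζ + |1/x^(n+1) - R n x * Q x| := final
        _ ≤ ζ + (ζ * 1 + (2*(n:ℝ) + 1) * (1 + ζ)^n * ζ * 1 + ζ * ((2*(n:ℝ) + 1) * (1 + ζ)^n * ζ)) := by linarith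
        _ ≤ (2*((n:ℕ)+1:ℝ) + 1) * (1 + ζ)^(n+1) * ζ := by
            rw [hstep]
            have hp : (0:ℝ) < (1+ζ)^n := by positivity
            nlinarith [hgeom, pow_succ (1+ζ) n]
        _ = (2*(((n:ℕ)+1:ℕ):ℝ) + 1) * (1 + ζ)^(n+1) * ζ := by push_cast; ring
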